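/- For every C > 0 and every integer n ≥ 0 there exist C̃ > 0 and ε₀ > 0, depending only on C and n, with the following property: let M be a locally C-Lipschitz contractible metric space, let 0 < ε < ε₀, let Δ := {x ∈ ℝ^{n+1} : x_i ≥ 0 for all i, Σ_i x_i = ε} be the ε-scaled standard n-simplex with the Euclidean metric, and let f₀, f₁ : Δ → M be C-Lipschitz maps with sup_{x∈Δ} d(f₀(x), f₁(x)) ≤ ε. Then f₀ and f₁ are (C̃, ε)-Lipschitz homotopic. -/
import Mathlib


open Metric Set

/-- `U` is `(C, ε)`-Lipschitz strongly contractible (with some center `p ∈ U`),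
with respect to the L¹ metric on the product with the time interval. -/
def LipStronglyContractible {X : Type*} [MetricSpace X] (C ε : ℝ) (U : Set X) : Prop :=
  ∃ p ∈ U, ∃ φ : X → ℝ → X,
    (∀ x ∈ U, ∀ t ∈ Set.Icc (0 : ℝ) ε, φ x t ∈ U) ∧
    (∀ x ∈ U, ∀ x' ∈ U, ∀ s ∈ Set.Icc (0 : ℝ) ε, ∀ s' ∈ Set.Icc (0 : ℝ) ε,
      dist (φ x s) (φ x' s') ≤ C * (dist x x' + |s - s'|)) ∧
    (∀ x ∈ U, φ x 0 = x) ∧ (∀ x ∈ U, φ x ε = p) ∧ (∀ t ∈ Set.Icc (0 : ℝ) ε, φ p t = p)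

/-- `X` is locally `C`-Lipschitz contractible. -/
def LocallyLipContractible (X : Type*) [MetricSpace X] (C : ℝ) : Prop :=
  ∀ (p : X) (ε : ℝ), 0 < ε → ε < C⁻¹ →
    ∃ U : Set X, IsOpen U ∧ ball p ε ⊆ U ∧ LipStronglyContractible C ε U

/-- The `ε`-scaled standard `n`-simplex in `ℝ^{n+1}` with the Euclidean metric. -/
def scaledSimplex (n : ℕ) (ε : ℝ) : Set (EuclideanSpace ℝ (Fin (n + 1))) :=
  {x | (∀ i, 0 ≤ x i) ∧ ∑ i, x i = ε}

/-- Diameter bound for the scaled simplex. -/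
lemma scaledSimplex_dist_le {n : ℕ} {ε : ℝ} (hε : 0 ≤ ε)
    {x y : EuclideanSpace ℝ (Fin (n + 1))}
    (hx : x ∈ scaledSimplex n ε) (hy : y ∈ scaledSimplex n ε) : dist x y ≤ 2 * ε := by
  obtain ⟨hx1, hx2⟩ := hx
  obtain ⟨hy1, hy2⟩ := hy
  rw [EuclideanSpace.dist_eq]
  have h1 : ∑ i, dist (x i) (y i) ^ 2 ≤ (∑ i, dist (x i) (y i)) ^ 2 :=
    Finset.sum_sq_le_sq_sum_of_nonneg (fun i _ => dist_nonneg)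
  have h2 : ∑ i, dist (x i) (y i) ≤ 2 * ε := by
    calc ∑ i, dist (x i) (y i) ≤ ∑ i, (x i + y i) := by
          refine Finset.sum_le_sum fun i _ => ?_
          rw [Real.dist_eq]
          rcases abs_cases (x i - y i) with ⟨h, _⟩ | ⟨h, _⟩ <;>
            [linarith [hy1 i]; linarith [hx1 i]]
      _ = 2 * ε := by rw [Finset.sum_add_distrib, hx2, hy2]; ring
  calc Real.sqrt (∑ i, dist (x i) (y i) ^ 2) ≤ Real.sqrt ((2 * ε) ^ 2) := by
        apply Real.sqrt_le_sqrt
        refine h1.trans ?_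
        have : (0:ℝ) ≤ ∑ i, dist (x i) (y i) :=
          Finset.sum_nonneg fun i _ => dist_nonneg
        nlinarith
    _ = 2 * ε := by rw [Real.sqrt_sq (by linarith)]

/-- **Corollary.** For every `C > 0` and `n ≥ 0` there are `C̃ > 0` and `ε₀ > 0`,
depending only on `C` and `n`, such that: if `M` is locally `C`-Lipschitz contractible,
`0 < ε < ε₀`, and `f₀, f₁` are `C`-Lipschitz maps from the `ε`-scaled standard
`n`-simplex `Δ` to `M` with `dist (f₀ x) (f₁ x) ≤ ε` on `Δ`, then `f₀` and `f₁` are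
`(C̃, ε)`-Lipschitz homotopic (as maps on `Δ`). -/
theorem lipschitz_homotopic_of_close_on_simplex :
    ∀ C : ℝ, 0 < C → ∀ n : ℕ, ∃ Ct : ℝ, 0 < Ct ∧ ∃ ε₀ : ℝ, 0 < ε₀ ∧
      ∀ (M : Type*) [MetricSpace M], LocallyLipContractible M C →
      ∀ ε : ℝ, 0 < ε → ε < ε₀ →
      ∀ f₀ f₁ : EuclideanSpace ℝ (Fin (n + 1)) → M,
        (∀ x ∈ scaledSimplex n ε, ∀ x' ∈ scaledSimplex n ε,
          dist (f₀ x) (f₀ x') ≤ C * dist x x') →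
        (∀ x ∈ scaledSimplex n ε, ∀ x' ∈ scaledSimplex n ε,
          dist (f₁ x) (f₁ x') ≤ C * dist x x') →
        (∀ x ∈ scaledSimplex n ε, dist (f₀ x) (f₁ x) ≤ ε) →
        ∃ h : EuclideanSpace ℝ (Fin (n + 1)) → ℝ → M,
          (∀ x ∈ scaledSimplex n ε, ∀ x' ∈ scaledSimplex n ε,
            ∀ s ∈ Set.Icc (0 : ℝ) ε, ∀ s' ∈ Set.Icc (0 : ℝ) ε,
              dist (h x s) (h x' s') ≤ Ct * (dist x x' + |s - s'|)) ∧
          (∀ x ∈ scaledSimplex n ε, h x 0 = f₀ x) ∧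
          (∀ x ∈ scaledSimplex n ε, h x ε = f₁ x) := by
  intro C hC n
  obtain ⟨K, hKdef⟩ : ∃ K : ℝ, K = 2 * C + 2 := ⟨_, rfl⟩
  have hK : 0 < K := by rw [hKdef]; positivity
  refine ⟨C * C + 2 * C * K, by positivity, C⁻¹ / K, by positivity, ?_⟩
  intro M _ hM ε hε hεlt f₀ f₁ hf₀ hf₁ hclose
  -- the vertex ε • e₀ of the simplex
  set x₀ : EuclideanSpace ℝ (Fin (n + 1)) := EuclideanSpace.single 0 ε with hx₀def
  have hx₀ : x₀ ∈ scaledSimplex n ε := by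
    constructor
    · intro i
      simp only [hx₀def, EuclideanSpace.single_apply]
      split <;> simp [le_of_lt hε]
    · simp [hx₀def, EuclideanSpace.single_apply]
  have hKε : 0 < K * ε := by positivity
  have hKεlt : K * ε < C⁻¹ := by
    have h := (lt_div_iff₀ hK).mp hεlt
    linarith
  obtain ⟨U, hUopen, hball, p, hpU, φ, hφmem, hφlip, hφ0, hφε, hφp⟩ :=
    hM (f₀ x₀) (K * ε) hKε hKεlt
  -- the images of f₀ and f₁ lie in U
  have hf₀U : ∀ x ∈ scaledSimplex n ε, f₀ x ∈ U := by
    intro x hx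
    apply hball
    rw [mem_ball]
    calc dist (f₀ x) (f₀ x₀) ≤ C * dist x x₀ := hf₀ x hx x₀ hx₀
      _ ≤ C * (2 * ε) := by
          have := scaledSimplex_dist_le (le_of_lt hε) hx hx₀
          nlinarith
      _ < K * ε := by rw [hKdef]; nlinarith
  have hf₁U : ∀ x ∈ scaledSimplex n ε, f₁ x ∈ U := by
    intro x hx
    apply hball
    rw [mem_ball]
    calc dist (f₁ x) (f₀ x₀) ≤ dist (f₁ x) (f₀ x) + dist (f₀ x) (f₀ x₀) := dist_triangle _ _ _
      _ ≤ ε + C * (2 * ε) := by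
          have h1 := hclose x hx
          have h2 := hf₀ x hx x₀ hx₀
          have h3 := scaledSimplex_dist_le (le_of_lt hε) hx hx₀
          rw [dist_comm (f₁ x) (f₀ x)]
          nlinarith
      _ < K * ε := by rw [hKdef]; nlinarith
  -- the homotopy: contract f₀ to p on [0, ε/2], then expand p to f₁ on [ε/2, ε]
  refine ⟨fun x t => if t ≤ ε / 2 then φ (f₀ x) (2 * K * t) else φ (f₁ x) (2 * K * (ε - t)),
    ?_, ?_, ?_⟩
  · -- Lipschitz bound
    intro x hx x' hx' s hs s' hs'
    obtain ⟨hs0, hsε⟩ := hs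
    obtain ⟨hs'0, hs'ε⟩ := hs'
    have habs : (0:ℝ) ≤ |s - s'| := abs_nonneg _
    have hd : (0:ℝ) ≤ dist x x' := dist_nonneg
    have habs1 : s - s' ≤ |s - s'| := le_abs_self _
    have habs2 : s' - s ≤ |s - s'| := by rw [abs_sub_comm]; exact le_abs_self _
    have hCK : (0:ℝ) ≤ C * K := mul_nonneg hC.le hK.le
    have hCC : (0:ℝ) ≤ C * C := mul_nonneg hC.le hC.le
    have hCCd : (0:ℝ) ≤ C * C * dist x x' := mul_nonneg hCC hd
    have hCCa : (0:ℝ) ≤ C * C * |s - s'| := mul_nonneg hCC habs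
    have hCKd : (0:ℝ) ≤ C * K * dist x x' := mul_nonneg hCK hd
    have hCKa : C * K * (s' - s) ≤ C * K * |s - s'| := mul_le_mul_of_nonneg_left habs2 hCK
    have hCKa' : C * K * (s - s') ≤ C * K * |s - s'| := mul_le_mul_of_nonneg_left habs1 hCK
    -- time membership helpers
    have mem1 : ∀ t : ℝ, 0 ≤ t → t ≤ ε / 2 → 2 * K * t ∈ Set.Icc (0 : ℝ) (K * ε) := by
      intro t h1 h2
      have := mul_le_mul_of_nonneg_left h2 hK.le
      constructor
      · positivity
      · linarith
    have mem2 : ∀ t : ℝ, ε / 2 ≤ t → t ≤ ε → 2 * K * (ε - t) ∈ Set.Icc (0 : ℝ) (K * ε) := by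
      intro t h1 h2
      have h3 := mul_le_mul_of_nonneg_left h1 hK.le
      have h4 := mul_le_mul_of_nonneg_left h2 hK.le
      constructor
      · linarith
      · linarith
    have memKε : K * ε ∈ Set.Icc (0 : ℝ) (K * ε) := ⟨le_of_lt hKε, le_refl _⟩
    by_cases h1 : s ≤ ε / 2 <;> by_cases h2 : s' ≤ ε / 2
    · simp only [if_pos h1, if_pos h2]
      have hlip := hφlip (f₀ x) (hf₀U x hx) (f₀ x') (hf₀U x' hx')
        (2 * K * s) (mem1 s hs0 h1) (2 * K * s') (mem1 s' hs'0 h2)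
      have hab : |2 * K * s - 2 * K * s'| = 2 * K * |s - s'| := by
        rw [show 2 * K * s - 2 * K * s' = 2 * K * (s - s') by ring, abs_mul,
          abs_of_pos (by linarith : (0:ℝ) < 2 * K)]
      rw [hab] at hlip
      have hff := hf₀ x hx x' hx'
      have hCff : C * dist (f₀ x) (f₀ x') ≤ C * (C * dist x x') :=
        mul_le_mul_of_nonneg_left hff hC.le
      linarith [hlip, hCff]
    · -- mixed case: s ≤ ε/2 < s'
      simp only [if_pos h1, if_neg h2]
      push_neg at h2
      have hks : K * s ≤ K * (ε / 2) := mul_le_mul_of_nonneg_left h1 hK.le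
      have hks' : K * (ε / 2) ≤ K * s' := mul_le_mul_of_nonneg_left h2.le hK.le
      have d1 : dist (φ (f₀ x) (2 * K * s)) p ≤ C * (K * ε - 2 * K * s) := by
        have hlip := hφlip (f₀ x) (hf₀U x hx) (f₀ x) (hf₀U x hx)
          (2 * K * s) (mem1 s hs0 h1) (K * ε) memKε
        rw [hφε (f₀ x) (hf₀U x hx)] at hlip
        simp only [dist_self, zero_add] at hlip
        have hle : 2 * K * s - K * ε ≤ 0 := by linarith
        rwa [abs_of_nonpos hle, neg_sub] at hlip
      have d2 : dist (φ (f₁ x') (2 * K * (ε - s'))) p ≤ C * (2 * K * s' - K * ε) := by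
        have hlip := hφlip (f₁ x') (hf₁U x' hx') (f₁ x') (hf₁U x' hx')
          (2 * K * (ε - s')) (mem2 s' h2.le hs'ε) (K * ε) memKε
        rw [hφε (f₁ x') (hf₁U x' hx')] at hlip
        simp only [dist_self, zero_add] at hlip
        have hle : 2 * K * (ε - s') - K * ε ≤ 0 := by linarith
        rwa [abs_of_nonpos hle, neg_sub,
          show K * ε - 2 * K * (ε - s') = 2 * K * s' - K * ε by ring] at hlip
      calc dist (φ (f₀ x) (2 * K * s)) (φ (f₁ x') (2 * K * (ε - s')))
          ≤ dist (φ (f₀ x) (2 * K * s)) p + dist (φ (f₁ x') (2 * K * (ε - s'))) p := by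
            rw [dist_comm (φ (f₁ x') (2 * K * (ε - s'))) p]; exact dist_triangle _ _ _
        _ ≤ C * (K * ε - 2 * K * s) + C * (2 * K * s' - K * ε) := add_le_add d1 d2
        _ ≤ (C * C + 2 * C * K) * (dist x x' + |s - s'|) := by linarith [hCKa]
    · -- mixed case: s' ≤ ε/2 < s
      simp only [if_neg h1, if_pos h2]
      push_neg at h1
      have hks : K * (ε / 2) ≤ K * s := mul_le_mul_of_nonneg_left h1.le hK.le
      have hks' : K * s' ≤ K * (ε / 2) := mul_le_mul_of_nonneg_left h2 hK.le
      have d1 : dist (φ (f₁ x) (2 * K * (ε - s))) p ≤ C * (2 * K * s - K * ε) := by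
        have hlip := hφlip (f₁ x) (hf₁U x hx) (f₁ x) (hf₁U x hx)
          (2 * K * (ε - s)) (mem2 s h1.le hsε) (K * ε) memKε
        rw [hφε (f₁ x) (hf₁U x hx)] at hlip
        simp only [dist_self, zero_add] at hlip
        have hle : 2 * K * (ε - s) - K * ε ≤ 0 := by linarith
        rwa [abs_of_nonpos hle, neg_sub,
          show K * ε - 2 * K * (ε - s) = 2 * K * s - K * ε by ring] at hlip
      have d2 : dist (φ (f₀ x') (2 * K * s')) p ≤ C * (K * ε - 2 * K * s') := by
        have hlip := hφlip (f₀ x') (hf₀U x' hx') (f₀ x') (hf₀U x' hx')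
          (2 * K * s') (mem1 s' hs'0 h2) (K * ε) memKε
        rw [hφε (f₀ x') (hf₀U x' hx')] at hlip
        simp only [dist_self, zero_add] at hlip
        have hle : 2 * K * s' - K * ε ≤ 0 := by linarith
        rwa [abs_of_nonpos hle, neg_sub] at hlip
      calc dist (φ (f₁ x) (2 * K * (ε - s))) (φ (f₀ x') (2 * K * s'))
          ≤ dist (φ (f₁ x) (2 * K * (ε - s))) p + dist (φ (f₀ x') (2 * K * s')) p := by
            rw [dist_comm (φ (f₀ x') (2 * K * s')) p]; exact dist_triangle _ _ _
        _ ≤ C * (2 * K * s - K * ε) + C * (K * ε - 2 * K * s') := add_le_add d1 d2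
        _ ≤ (C * C + 2 * C * K) * (dist x x' + |s - s'|) := by linarith [hCKa']
    · simp only [if_neg h1, if_neg h2]
      push_neg at h1 h2
      have hlip := hφlip (f₁ x) (hf₁U x hx) (f₁ x') (hf₁U x' hx')
        (2 * K * (ε - s)) (mem2 s h1.le hsε)
        (2 * K * (ε - s')) (mem2 s' h2.le hs'ε)
      have hab : |2 * K * (ε - s) - 2 * K * (ε - s')| = 2 * K * |s - s'| := by
        rw [show 2 * K * (ε - s) - 2 * K * (ε - s') = 2 * K * (s' - s) by ring, abs_mul,
          abs_of_pos (by linarith : (0:ℝ) < 2 * K), abs_sub_comm]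
      rw [hab] at hlip
      have hff := hf₁ x hx x' hx'
      have hCff : C * dist (f₁ x) (f₁ x') ≤ C * (C * dist x x') :=
        mul_le_mul_of_nonneg_left hff hC.le
      linarith [hlip, hCff]
  · -- h x 0 = f₀ x
    intro x hx
    beta_reduce
    rw [if_pos (by linarith : (0:ℝ) ≤ ε / 2), mul_zero]
    exact hφ0 (f₀ x) (hf₀U x hx)
  · -- h x ε = f₁ x
    intro x hx
    beta_reduce
    rw [if_neg (by linarith : ¬ (ε ≤ ε / 2)), sub_self, mul_zero]
    exact hφ0 (f₁ x) (hf₁U x hx)
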